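/- Fix a > 1, K > 0, and constants c₁, c₂ > 0. Let (u_j)_{j≥1} be positive reals with u_j → 0, and (λ_j)_{j≥1} satisfy 0 ≤ λ_n ≤ K/n for all n. Assume that for all n ≥ 2 and all 1 ≤ j ≤ n−1, u_{j+1} ≥ λ_n + (1 − c₁λ_n)·u_j − c₂·u_j^a. Then there exists a constant c > 0 (independent of n and of (λ_j)) such that u_n ≥ c·(λ_n^{1/a} + n^{−1/(a−1)}) for all n ≥ 1. -/

import Mathlib

open Real

lemma aux_grad9 {a : ℝ} (ha : 1 ≤ a) {x y : ℝ} (hy : 0 ≤ y) (hxy : y ≤ x) :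
    x ^ a - y ^ a ≤ a * x ^ (a - 1) * (x - y) := by
  have hx : 0 ≤ x := hy.trans hxy
  rcases eq_or_lt_of_le hx with h0 | hx0
  · have hx0 : x = 0 := h0.symm
    have hy0 : y = 0 := le_antisymm (hxy.trans_eq hx0) hy
    simp [hx0, hy0, Real.zero_rpow (by linarith : a ≠ 0)]
  · have hs : -1 ≤ (y - x) / x := by
      rw [neg_le, ← neg_div, div_le_one hx0]; linarith
    have hB := one_add_mul_self_le_rpow_one_add hs ha
    have h1 : (1 + (y - x) / x) = y / x := by field_simp; ring
    rw [h1, Real.div_rpow hy hx] at hB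
    have hxa : 0 < x ^ a := Real.rpow_pos_of_pos hx0 a
    have hxx : x ^ (a - 1) * x = x ^ a := by
      rw [← Real.rpow_add_one hx0.ne' (a - 1)]; ring_nf
    have h3 : x ^ a * ((y - x) / x) = x ^ (a - 1) * (y - x) := by
      rw [← hxx]; field_simp
    have h4 := mul_le_mul_of_nonneg_left hB hxa.le
    rw [mul_add, mul_one, mul_div_cancel₀ _ hxa.ne'] at h4
    have h5 : x ^ a * (a * ((y - x) / x)) = a * (x ^ (a - 1) * (y - x)) := by
      rw [← h3]; ring
    rw [h5] at h4
    nlinarith [h4]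

lemma aux_key9 {p : ℝ} (hp : 0 < p) {j : ℝ} (hj : 1 ≤ j) :
    (j + 1) ^ (-p) + p * (j + 1) ^ (-(p + 1)) ≤ j ^ (-p) := by
  have hj0 : (0:ℝ) < j := lt_of_lt_of_le one_pos hj
  have hj1 : (0:ℝ) < j + 1 := by linarith
  have hs : -1 ≤ 1 / j := le_trans (by norm_num) (by positivity : (0:ℝ) ≤ 1 / j)
  have hB := one_add_mul_self_le_rpow_one_add hs (by linarith : 1 ≤ p + 1)
  have hr : (1 + 1 / j) = (j + 1) / j := by field_simp
  have hrpos : (0:ℝ) < (j + 1) / j := by positivity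
  have hrp : 1 + p / (j + 1) ≤ ((j + 1) / j) ^ p := by
    rw [hr] at hB
    have hsplit : ((j + 1) / j) ^ (p + 1) = ((j + 1) / j) ^ p * ((j + 1) / j) :=
      Real.rpow_add_one hrpos.ne' p
    rw [hsplit] at hB
    have := mul_le_mul_of_nonneg_right hB (le_of_lt (by positivity : (0:ℝ) < j / (j + 1)))
    have heq : ((j + 1) / j) ^ p * ((j + 1) / j) * (j / (j + 1)) = ((j + 1) / j) ^ p := by
      field_simp
    rw [heq] at this
    refine le_trans (le_of_eq ?_) this
    field_simp
    ring
  have hpow : ((j + 1) / j) ^ p = (j + 1) ^ p / j ^ p := Real.div_rpow (by linarith) hj0.le p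
  have hmul := mul_le_mul_of_nonneg_left hrp (le_of_lt (Real.rpow_pos_of_pos hj1 (-p)))
  have e1 : (j + 1) ^ (-p) * ((j + 1) / j) ^ p = j ^ (-p) := by
    rw [hpow, Real.rpow_neg hj1.le, Real.rpow_neg hj0.le]
    field_simp
  have e2 : (j + 1) ^ (-p) * (1 + p / (j + 1)) = (j + 1) ^ (-p) + p * (j + 1) ^ (-(p + 1)) := by
    have h : (j + 1) ^ (-(p + 1)) = (j + 1) ^ (-p) * (j + 1)⁻¹ := by
      rw [show -(p + 1) = -p + (-1) by ring, Real.rpow_add hj1, Real.rpow_neg_one]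
    rw [h]; field_simp
  rw [e1, e2] at hmul
  exact hmul

set_option maxHeartbeats 1000000 in
theorem stmt9 (a K c₁ c₂ : ℝ) (ha : 1 < a) (hK : 0 < K) (hc₁ : 0 < c₁) (hc₂ : 0 < c₂)
    (u : ℕ → ℝ) (hu : ∀ j, 1 ≤ j → 0 < u j)
    (hu0 : Filter.Tendsto u Filter.atTop (nhds 0)) :
    ∃ c : ℝ, 0 < c ∧ ∀ lam : ℕ → ℝ,
      (∀ n, 1 ≤ n → 0 ≤ lam n ∧ lam n ≤ K / n) →
      (∀ n, 2 ≤ n → ∀ j, 1 ≤ j → j ≤ n - 1 →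
        u (j + 1) ≥ lam n + (1 - c₁ * lam n) * u j - c₂ * u j ^ a) →
      ∀ n, 1 ≤ n → u n ≥ c * (lam n ^ (1 / a) + (n : ℝ) ^ (-(1 / (a - 1)))) := by
  have ha0 : (0:ℝ) < a := by linarith
  have ha1 : (0:ℝ) < a - 1 := by linarith
  set p : ℝ := 1 / (a - 1) with hp_def
  have hp : 0 < p := by positivity
  -- the smallness threshold ε
  have hEpos : (0:ℝ) < (1 / (2 * a * c₂)) ^ (1 / (a - 1)) :=
    Real.rpow_pos_of_pos (by positivity) _
  set ε : ℝ := min (1 / (2 * c₁)) ((1 / (2 * a * c₂)) ^ (1 / (a - 1))) with hε_def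
  have hε : 0 < ε := lt_min (by positivity) hEpos
  have hεc₁ : c₁ * ε ≤ 1 / 2 := by
    have h1 := mul_le_mul_of_nonneg_left (min_le_left (1 / (2 * c₁))
      ((1 / (2 * a * c₂)) ^ (1 / (a - 1)))) hc₁.le
    have h2 : c₁ * (1 / (2 * c₁)) = 1 / 2 := by field_simp
    rw [h2] at h1
    exact h1
  have hεpow : a * c₂ * ε ^ (a - 1) ≤ 1 / 2 := by
    have h1 : ε ^ (a - 1) ≤ ((1 / (2 * a * c₂)) ^ (1 / (a - 1))) ^ (a - 1) :=
      Real.rpow_le_rpow hε.le (min_le_right _ _) ha1.le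
    have h2 : ((1 / (2 * a * c₂)) ^ (1 / (a - 1))) ^ (a - 1) = 1 / (2 * a * c₂) := by
      rw [← Real.rpow_mul (by positivity), one_div_mul_cancel ha1.ne', Real.rpow_one]
    rw [h2] at h1
    have h3 := mul_le_mul_of_nonneg_left h1 (by positivity : (0:ℝ) ≤ a * c₂)
    have h4 : a * c₂ * (1 / (2 * a * c₂)) = 1 / 2 := by field_simp
    rw [h4] at h3
    exact h3
  -- index J₀ from which u is below ε
  obtain ⟨J₀, hJ₀⟩ := Filter.eventually_atTop.mp (hu0.eventually_lt_const hε)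
  -- the threshold index N
  set N : ℕ := max (max J₀ 1) ⌈2 * c₁ * K⌉₊ with hN_def
  have hN1 : 1 ≤ N := le_max_of_le_left (le_max_right _ _)
  have hNJ : J₀ ≤ N := le_max_of_le_left (le_max_left _ _)
  have hNK : 2 * c₁ * K ≤ (N : ℝ) :=
    le_trans (Nat.le_ceil _) (by exact_mod_cast Nat.cast_le.mpr (le_max_right (max J₀ 1) _))
  have hsmall : ∀ j, N ≤ j → u j ≤ ε := fun j hj => (hJ₀ j (le_trans hNJ hj)).le
  have hNpos : (0:ℝ) < (N:ℝ) := by exact_mod_cast hN1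
  have huN : 0 < u N := hu N hN1
  have huNε : u N ≤ ε := hsmall N le_rfl
  -- minimum of u over [1, N]
  obtain ⟨k₀, hk₀mem, hk₀min⟩ := (Finset.Icc 1 N).exists_min_image u
    ⟨1, Finset.mem_Icc.mpr ⟨le_refl 1, hN1⟩⟩
  set m : ℝ := u k₀ with hm_def
  have hm : 0 < m := hu k₀ (Finset.mem_Icc.mp hk₀mem).1
  have hmle : ∀ n : ℕ, 1 ≤ n → n ≤ N → m ≤ u n := fun n h1 h2 =>
    hk₀min n (Finset.mem_Icc.mpr ⟨h1, h2⟩)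
  -- the constant β for part 2
  have hβ₀pos : (0:ℝ) < (p * 2 ^ (-(p + 1)) / c₂) ^ (1 / (a - 1)) :=
    Real.rpow_pos_of_pos (by positivity) _
  set β : ℝ := min (u N) ((p * 2 ^ (-(p + 1)) / c₂) ^ (1 / (a - 1))) with hβ_def
  have hβpos : 0 < β := lt_min huN hβ₀pos
  have hβN : β ≤ u N := min_le_left _ _
  have hβpow : c₂ * β ^ (a - 1) ≤ p * 2 ^ (-(p + 1)) := by
    have h1 : β ^ (a - 1) ≤ ((p * 2 ^ (-(p + 1)) / c₂) ^ (1 / (a - 1))) ^ (a - 1) :=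
      Real.rpow_le_rpow hβpos.le (min_le_right _ _) ha1.le
    have h2 : ((p * 2 ^ (-(p + 1)) / c₂) ^ (1 / (a - 1))) ^ (a - 1)
        = p * 2 ^ (-(p + 1)) / c₂ := by
      rw [← Real.rpow_mul (by positivity), one_div_mul_cancel ha1.ne', Real.rpow_one]
    rw [h2] at h1
    have h3 := mul_le_mul_of_nonneg_left h1 hc₂.le
    have h4 : c₂ * (p * 2 ^ (-(p + 1)) / c₂) = p * 2 ^ (-(p + 1)) := by field_simp
    rw [h4] at h3
    exact h3
  -- monotonicity of the recursion map on [0, ε]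
  have hg : ∀ l : ℝ, 0 ≤ l → c₁ * l ≤ 1 / 2 → ∀ x y : ℝ, 0 ≤ y → y ≤ x → x ≤ ε →
      l + (1 - c₁ * l) * y - c₂ * y ^ a ≤ l + (1 - c₁ * l) * x - c₂ * x ^ a := by
    intro l hl hl2 x y hy hyx hxε
    have hgrad := aux_grad9 ha.le hy hyx
    have hx : 0 ≤ x := hy.trans hyx
    have hxa : x ^ (a - 1) ≤ ε ^ (a - 1) := Real.rpow_le_rpow hx hxε ha1.le
    have hd : 0 ≤ x - y := sub_nonneg.mpr hyx
    have h1 : c₂ * (x ^ a - y ^ a) ≤ c₂ * (a * x ^ (a - 1) * (x - y)) :=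
      mul_le_mul_of_nonneg_left hgrad hc₂.le
    have h2 : a * x ^ (a - 1) * (x - y) ≤ a * ε ^ (a - 1) * (x - y) :=
      mul_le_mul_of_nonneg_right (mul_le_mul_of_nonneg_left hxa ha0.le) hd
    have h2' : c₂ * (a * x ^ (a - 1) * (x - y)) ≤ c₂ * (a * ε ^ (a - 1) * (x - y)) :=
      mul_le_mul_of_nonneg_left h2 hc₂.le
    have h3 : a * c₂ * ε ^ (a - 1) * (x - y) ≤ (1 / 2) * (x - y) :=
      mul_le_mul_of_nonneg_right hεpow hd
    have h4 : 0 ≤ (x - y) * (1 / 2 - c₁ * l) := mul_nonneg hd (by linarith)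
    nlinarith [h1, h2', h3, h4]
  -- Part 1
  have part1 : ∀ lam : ℕ → ℝ, (∀ n, 1 ≤ n → 0 ≤ lam n ∧ lam n ≤ K / n) →
      (∀ n, 2 ≤ n → ∀ j, 1 ≤ j → j ≤ n - 1 →
        u (j + 1) ≥ lam n + (1 - c₁ * lam n) * u j - c₂ * u j ^ a) →
      ∀ n, N ≤ n → min (u N) ((lam n / (2 * c₂)) ^ (1 / a)) ≤ u n := by
    intro lam hlam hrec n hn
    obtain ⟨hl0, hlK⟩ := hlam n (hN1.trans hn)
    have hnpos : (0:ℝ) < (n:ℝ) := by exact_mod_cast Nat.lt_of_lt_of_le Nat.zero_lt_one (hN1.trans hn)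
    have hnN : (N:ℝ) ≤ (n:ℝ) := by exact_mod_cast hn
    have hlhalf : c₁ * lam n ≤ 1 / 2 := by
      have h1 := mul_le_mul_of_nonneg_left hlK hc₁.le
      have h2 : c₁ * (K / (n:ℝ)) ≤ 1 / 2 := by
        rw [show c₁ * (K / (n:ℝ)) = (c₁ * K) / (n:ℝ) by ring, div_le_iff₀ hnpos]
        linarith
      linarith
    set s : ℝ := min (u N) ((lam n / (2 * c₂)) ^ (1 / a)) with hs_def
    have hs0 : 0 ≤ s := le_min huN.le (Real.rpow_nonneg (by positivity) _)
    have hsε : s ≤ ε := le_trans (min_le_left _ _) huNε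
    have hsc : c₂ * s ^ a ≤ lam n / 2 := by
      have h1 : s ^ a ≤ ((lam n / (2 * c₂)) ^ (1 / a)) ^ a :=
        Real.rpow_le_rpow hs0 (min_le_right _ _) ha0.le
      have h2 : ((lam n / (2 * c₂)) ^ (1 / a)) ^ a = lam n / (2 * c₂) := by
        rw [← Real.rpow_mul (by positivity), one_div_mul_cancel ha0.ne', Real.rpow_one]
      rw [h2] at h1
      have h3 := mul_le_mul_of_nonneg_left h1 hc₂.le
      have h4 : c₂ * (lam n / (2 * c₂)) = lam n / 2 := by field_simp
      rw [h4] at h3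
      exact h3
    have hfix : s ≤ lam n + (1 - c₁ * lam n) * s - c₂ * s ^ a := by
      have hcs : c₁ * s ≤ 1 / 2 := le_trans (mul_le_mul_of_nonneg_left hsε hc₁.le) hεc₁
      have h1 : lam n * (c₁ * s) ≤ lam n * (1 / 2) := mul_le_mul_of_nonneg_left hcs hl0
      linarith [hsc, h1]
    have key : ∀ k, N ≤ k → (k ≤ n → s ≤ u k) := by
      intro k hk
      induction k, hk using Nat.le_induction with
      | base => intro _; exact min_le_left _ _
      | succ k hk ih =>
        intro hkn
        have hsk : s ≤ u k := ih (le_trans (Nat.le_succ k) hkn)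
        have hrec' : lam n + (1 - c₁ * lam n) * u k - c₂ * u k ^ a ≤ u (k + 1) :=
          hrec n (by omega) k (by omega) (by omega)
        have hmono := hg (lam n) hl0 hlhalf (u k) s hs0 hsk (hsmall k hk)
        exact le_trans hfix (le_trans hmono hrec')
    exact key n hn le_rfl
  -- Part 2
  have part2 : ∀ lam : ℕ → ℝ, (∀ n, 1 ≤ n → 0 ≤ lam n ∧ lam n ≤ K / n) →
      (∀ n, 2 ≤ n → ∀ j, 1 ≤ j → j ≤ n - 1 →
        u (j + 1) ≥ lam n + (1 - c₁ * lam n) * u j - c₂ * u j ^ a) →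
      ∀ n, N ≤ n → β * (n:ℝ) ^ (-p) ≤ u n := by
    intro lam hlam hrec n hn
    induction n, hn using Nat.le_induction with
    | base =>
      have h1 : (N:ℝ) ^ (-p) ≤ 1 :=
        Real.rpow_le_one_of_one_le_of_nonpos (by exact_mod_cast hN1) (by linarith)
      have h2 := mul_le_mul_of_nonneg_left h1 hβpos.le
      rw [mul_one] at h2
      linarith [hβN]
    | succ j hj ih =>
      have hj1 : 1 ≤ j := le_trans hN1 hj
      have hjR : (1:ℝ) ≤ (j:ℝ) := by exact_mod_cast hj1
      have hjpos : (0:ℝ) < (j:ℝ) := by linarith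
      obtain ⟨hl0, _⟩ := hlam (j + 1) (by omega)
      have hrec' : lam (j + 1) + (1 - c₁ * lam (j + 1)) * u j - c₂ * u j ^ a ≤ u (j + 1) :=
        hrec (j + 1) (by omega) j hj1 (by omega)
      have hujε : u j ≤ ε := hsmall j hj
      have hdrop : u j - c₂ * u j ^ a ≤ u (j + 1) := by
        have hc1u : c₁ * u j ≤ 1 / 2 := le_trans (mul_le_mul_of_nonneg_left hujε hc₁.le) hεc₁
        have hpos := mul_nonneg hl0 (by linarith : (0:ℝ) ≤ 1 - c₁ * u j)
        linarith [hrec', hpos]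
      set mj : ℝ := β * (j:ℝ) ^ (-p) with hmj_def
      have hmjpos : 0 < mj := mul_pos hβpos (Real.rpow_pos_of_pos hjpos _)
      have hmjβ : mj ≤ β := by
        have h1 : (j:ℝ) ^ (-p) ≤ 1 := Real.rpow_le_one_of_one_le_of_nonpos hjR (by linarith)
        have h2 := mul_le_mul_of_nonneg_left h1 hβpos.le
        rw [mul_one] at h2
        exact h2
      have hmju : mj ≤ u j := ih
      have hmjε : mj ≤ ε := le_trans hmjβ (hβN.trans huNε)
      have hmono := hg 0 le_rfl (by linarith) (u j) mj hmjpos.le hmju hujε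
      have hmono' : mj - c₂ * mj ^ a ≤ u j - c₂ * u j ^ a := by
        linarith [hmono]
      have hstep : β * ((j:ℝ) + 1) ^ (-p) ≤ mj - c₂ * mj ^ a := by
        have e1 : mj ^ a = β ^ a * (j:ℝ) ^ (-(p + 1)) := by
          rw [hmj_def, Real.mul_rpow hβpos.le (Real.rpow_nonneg hjpos.le _)]
          congr 1
          rw [← Real.rpow_mul hjpos.le]
          congr 1
          rw [hp_def]
          field_simp
          ring
        have e2 : β ^ a = β ^ (a - 1) * β := by
          rw [← Real.rpow_add_one hβpos.ne']; ring_nf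
        have hk := aux_key9 hp hjR
        have h2j : (2:ℝ) ^ (-(p + 1)) * (j:ℝ) ^ (-(p + 1)) ≤ ((j:ℝ) + 1) ^ (-(p + 1)) := by
          rw [← Real.mul_rpow (by norm_num) hjpos.le]
          exact Real.rpow_le_rpow_of_nonpos (by linarith) (by linarith) (by linarith)
        have hA := mul_le_mul_of_nonneg_left hk hβpos.le
        have hB := mul_le_mul_of_nonneg_left h2j (by positivity : (0:ℝ) ≤ β * p)
        have hC := mul_le_mul_of_nonneg_right hβpow
          (by positivity : (0:ℝ) ≤ β * (j:ℝ) ^ (-(p + 1)))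
        rw [e1, e2]
        linarith [hA, hB, hC]
      have : β * ((j:ℝ) + 1) ^ (-p) ≤ u (j + 1) :=
        le_trans hstep (le_trans hmono' hdrop)
      convert this using 3
      push_cast
      ring
  -- assemble the constant
  set B : ℝ := (max K 1) ^ (1 / a) with hB_def
  have hBpos : 0 < B := Real.rpow_pos_of_pos (lt_max_of_lt_right one_pos) _
  have hhalf : (0:ℝ) < (1 / (2 * c₂)) ^ (1 / a) := Real.rpow_pos_of_pos (by positivity) _
  set cA : ℝ := min (min (u N / B) ((1 / (2 * c₂)) ^ (1 / a))) (m / B) with hcA_def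
  set cB : ℝ := min β m with hcB_def
  have hcApos : 0 < cA := lt_min (lt_min (by positivity) hhalf) (by positivity)
  have hcBpos : 0 < cB := lt_min hβpos hm
  refine ⟨min cA cB / 2, by positivity, ?_⟩
  intro lam hlam hrec n hn
  obtain ⟨hl0, hlK⟩ := hlam n hn
  have hnR : (1:ℝ) ≤ (n:ℝ) := by exact_mod_cast hn
  have hlamK : lam n ≤ max K 1 := by
    have : K / (n:ℝ) ≤ K := by
      rw [div_le_iff₀ (by linarith)]
      nlinarith
    exact le_trans hlK (this.trans (le_max_left _ _))
  have hX : (0:ℝ) ≤ lam n ^ (1 / a) := Real.rpow_nonneg hl0 _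
  have hXB : lam n ^ (1 / a) ≤ B := Real.rpow_le_rpow hl0 hlamK (by positivity)
  have hY : (0:ℝ) ≤ (n:ℝ) ^ (-p) := Real.rpow_nonneg (by linarith) _
  -- bound 1 : cA * lam n ^ (1/a) ≤ u n
  have bound1 : cA * lam n ^ (1 / a) ≤ u n := by
    rcases le_or_gt N n with hNn | hnN
    · refine le_trans ?_ (part1 lam hlam hrec n hNn)
      apply le_min
      · have h1 : cA * lam n ^ (1 / a) ≤ (u N / B) * B := by
          have hcA1 : cA ≤ u N / B := le_trans (min_le_left _ _) (min_le_left _ _)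
          have := mul_le_mul hcA1 hXB hX (by positivity)
          linarith
        rw [div_mul_cancel₀ _ hBpos.ne'] at h1
        exact h1
      · have hcA2 : cA ≤ (1 / (2 * c₂)) ^ (1 / a) := le_trans (min_le_left _ _) (min_le_right _ _)
        have h1 : cA * lam n ^ (1 / a) ≤ (1 / (2 * c₂)) ^ (1 / a) * lam n ^ (1 / a) :=
          mul_le_mul_of_nonneg_right hcA2 hX
        have h2 : (1 / (2 * c₂)) ^ (1 / a) * lam n ^ (1 / a) = (lam n / (2 * c₂)) ^ (1 / a) := by
          rw [← Real.mul_rpow (by positivity) hl0]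
          congr 1
          ring
        rw [h2] at h1
        exact h1
    · have hun : m ≤ u n := hmle n hn (le_of_lt hnN)
      have hcA3 : cA ≤ m / B := min_le_right _ _
      have h1 : cA * lam n ^ (1 / a) ≤ (m / B) * B := by
        have := mul_le_mul hcA3 hXB hX (by positivity)
        linarith
      rw [div_mul_cancel₀ _ hBpos.ne'] at h1
      linarith
  -- bound 2 : cB * n ^ (-p) ≤ u n
  have bound2 : cB * (n:ℝ) ^ (-p) ≤ u n := by
    rcases le_or_gt N n with hNn | hnN
    · refine le_trans ?_ (part2 lam hlam hrec n hNn)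
      exact mul_le_mul_of_nonneg_right (min_le_left _ _) hY
    · have hun : m ≤ u n := hmle n hn (le_of_lt hnN)
      have h1 : (n:ℝ) ^ (-p) ≤ 1 := Real.rpow_le_one_of_one_le_of_nonpos hnR (by linarith)
      have hcB2 : cB ≤ m := min_le_right _ _
      have h2 := mul_le_mul_of_nonneg_left h1 hcBpos.le
      rw [mul_one] at h2
      linarith
  -- combine
  have h1 : min cA cB * lam n ^ (1 / a) ≤ cA * lam n ^ (1 / a) :=
    mul_le_mul_of_nonneg_right (min_le_left _ _) hX
  have h2 : min cA cB * (n:ℝ) ^ (-p) ≤ cB * (n:ℝ) ^ (-p) :=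
    mul_le_mul_of_nonneg_right (min_le_right _ _) hY
  have goal : min cA cB / 2 * (lam n ^ (1 / a) + (n:ℝ) ^ (-p)) ≤ u n := by
    linarith [h1, h2, bound1, bound2]
  exact goal
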